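/- arXiv:2512.00632 — 2 statements merged into one kernel-verified Lean document; each statement's English description precedes it below -/
import Mathlib

section
/- Let $X_1, \ldots, X_n$ be independent Bernoulli random variables with $\Pr[X_i = 1] = p_i$, let $S = \sum_{i=1}^n X_i$ and $\lambda = \sum_{i=1}^n p_i$. Then the total variation distance between the law of $S$ and the Poisson distribution with mean $\lambda$ is at most $\sum_{i=1}^n p_i^2$. -/
open MeasureTheory Real ProbabilityTheory

namespace LeCamAux

noncomputable def cv (f g : ℕ → ℝ) : ℕ → ℝ := fun k => ∑ j ∈ Finset.range (k+1), f j * g (k - j)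

lemma cv_nonneg {f g : ℕ → ℝ} (hf : ∀ k, 0 ≤ f k) (hg : ∀ k, 0 ≤ g k) (k : ℕ) :
    0 ≤ cv f g k :=
  Finset.sum_nonneg fun j _ => mul_nonneg (hf j) (hg _)

lemma cv_summable {f g : ℕ → ℝ} (hf : Summable fun k => |f k|) (hg : Summable fun k => |g k|) :
    Summable (cv f g) := by
  apply summable_sum_mul_range_of_summable_mul
  exact summable_mul_of_summable_norm (f := f) (g := g) hf hg

lemma cv_tsum {f g : ℕ → ℝ} (hf : Summable fun k => |f k|) (hg : Summable fun k => |g k|) :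
    ∑' k, cv f g k = (∑' k, f k) * (∑' k, g k) := by
  rw [Summable.tsum_mul_tsum_eq_tsum_sum_range hf.of_abs hg.of_abs
    (summable_mul_of_summable_norm (f := f) (g := g) hf hg)]
  rfl

lemma abs_cv_le {f g : ℕ → ℝ} (k : ℕ) :
    |cv f g k| ≤ cv (fun j => |f j|) (fun j => |g j|) k := by
  refine (Finset.abs_sum_le_sum_abs _ _).trans ?_
  apply Finset.sum_le_sum
  intro j _
  rw [abs_mul]

lemma cv_abs_summable {f g : ℕ → ℝ} (hf : Summable fun k => |f k|)
    (hg : Summable fun k => |g k|) : Summable fun k => |cv f g k| := by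
  have h1 : Summable (cv (fun j => |f j|) (fun j => |g j|)) := by
    apply cv_summable <;> simpa [abs_abs]
  exact h1.of_nonneg_of_le (fun k => abs_nonneg _) abs_cv_le

lemma cv_abs_tsum_le {f g : ℕ → ℝ} (hf : Summable fun k => |f k|)
    (hg : Summable fun k => |g k|) :
    ∑' k, |cv f g k| ≤ (∑' k, |f k|) * (∑' k, |g k|) := by
  have h1 : Summable (cv (fun j => |f j|) (fun j => |g j|)) := by
    apply cv_summable <;> simpa [abs_abs]
  have := Summable.tsum_le_tsum abs_cv_le (cv_abs_summable hf hg) h1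
  refine this.trans_eq ?_
  rw [cv_tsum (by simpa [abs_abs]) (by simpa [abs_abs])]

lemma cv_sub (f f' g : ℕ → ℝ) (k : ℕ) :
    cv f g k - cv f' g k = cv (fun j => f j - f' j) g k := by
  simp [cv, sub_mul, Finset.sum_sub_distrib]

lemma cv_sub' (f g g' : ℕ → ℝ) (k : ℕ) :
    cv f g k - cv f g' k = cv f (fun j => g j - g' j) k := by
  simp [cv, mul_sub, Finset.sum_sub_distrib]

noncomputable def poi (a : ℝ) : ℕ → ℝ := fun k => Real.exp (-a) * a ^ k / Nat.factorial k

noncomputable def ber (p : ℝ) : ℕ → ℝ := fun k =>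
  if k = 0 then 1 - p else if k = 1 then p else 0

lemma poi_nonneg {a : ℝ} (ha : 0 ≤ a) (k : ℕ) : 0 ≤ poi a k := by
  unfold poi
  positivity

lemma summable_poi (a : ℝ) : Summable (poi a) := by
  unfold poi
  simp_rw [mul_div_assoc]
  exact (Real.summable_pow_div_factorial a).mul_left _

lemma tsum_poi (a : ℝ) : ∑' k, poi a k = 1 := by
  unfold poi
  simp_rw [mul_div_assoc]
  rw [tsum_mul_left]
  have : ∑' k : ℕ, a ^ k / (Nat.factorial k : ℝ) = Real.exp a := by
    rw [Real.exp_eq_exp_ℝ, NormedSpace.exp_eq_tsum_div]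
  rw [this, ← Real.exp_add]
  simp

lemma summable_ber (p : ℝ) : Summable (ber p) := by
  apply summable_of_ne_finset_zero (s := {0, 1})
  intro k hk
  simp only [Finset.mem_insert, Finset.mem_singleton, not_or] at hk
  simp [ber, hk.1, hk.2]

lemma tsum_ber (p : ℝ) : ∑' k, ber p k = 1 := by
  rw [tsum_eq_sum (s := {0, 1}) (by
    intro k hk
    simp only [Finset.mem_insert, Finset.mem_singleton, not_or] at hk
    simp [ber, hk.1, hk.2])]
  norm_num [ber]

lemma ber_nonneg {p : ℝ} (h0 : 0 ≤ p) (h1 : p ≤ 1) (k : ℕ) : 0 ≤ ber p k := by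
  unfold ber
  split_ifs <;> linarith

lemma cv_poi (a b : ℝ) (k : ℕ) : cv (poi a) (poi b) k = poi (a + b) k := by
  unfold cv poi
  rw [neg_add, Real.exp_add, add_pow, Finset.mul_sum, Finset.sum_div]
  apply Finset.sum_congr rfl
  intro j hj
  have hjk : j ≤ k := Nat.lt_succ_iff.mp (Finset.mem_range.mp hj)
  have hfact : (Nat.choose k j : ℝ) * (Nat.factorial j) * (Nat.factorial (k - j)) =
      Nat.factorial k := by
    exact_mod_cast congrArg (Nat.cast (R := ℝ)) (Nat.choose_mul_factorial_mul_factorial hjk)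
  have hj0 : (Nat.factorial j : ℝ) ≠ 0 := Nat.cast_ne_zero.mpr (Nat.factorial_ne_zero j)
  have hkj0 : (Nat.factorial (k - j) : ℝ) ≠ 0 := Nat.cast_ne_zero.mpr (Nat.factorial_ne_zero _)
  have hk0 : (Nat.factorial k : ℝ) ≠ 0 := Nat.cast_ne_zero.mpr (Nat.factorial_ne_zero k)
  field_simp
  ring_nf
  rw [← hfact]
  ring



lemma tsum_split2 {f : ℕ → ℝ} (hf : Summable f) :
    ∑' k, f k = f 0 + f 1 + ∑' k, f (k+2) := by
  rw [Summable.tsum_eq_zero_add hf, Summable.tsum_eq_zero_add ((summable_nat_add_iff 1).mpr hf), ← add_assoc]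

lemma summable_abs_sub_ber_poi (p : ℝ) : Summable fun k => |ber p k - poi p k| :=
  ((summable_ber p).sub (summable_poi p)).abs

lemma l1_ber_poi {p : ℝ} (h0 : 0 ≤ p) (h1 : p ≤ 1) :
    ∑' k, |ber p k - poi p k| ≤ 2 * p ^ 2 := by
  have hsum := summable_abs_sub_ber_poi p
  have hE1 : 1 - p ≤ Real.exp (-p) := by
    have := Real.add_one_le_exp (-p); linarith
  have hE2 : Real.exp (-p) ≤ 1 := by
    rw [← Real.exp_zero]; exact Real.exp_le_exp.mpr (by linarith)
  have htail : ∑' k, poi p (k+2) = 1 - Real.exp (-p) - p * Real.exp (-p) := by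
    have h2 := tsum_split2 (summable_poi p)
    rw [tsum_poi p] at h2
    have h0' : poi p 0 = Real.exp (-p) := by simp [poi]
    have h1' : poi p 1 = Real.exp (-p) * p := by simp [poi]
    rw [h0', h1'] at h2
    linarith
  rw [tsum_split2 hsum]
  have he : ∀ k, |ber p (k+2) - poi p (k+2)| = poi p (k+2) := by
    intro k
    simp only [ber]
    rw [if_neg (by omega), if_neg (by omega), zero_sub, abs_neg,
      abs_of_nonneg (poi_nonneg h0 _)]
  rw [tsum_congr he, htail]
  have hb0 : ber p 0 = 1 - p := by simp [ber]
  have hb1 : ber p 1 = p := by simp [ber]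
  have hp0 : poi p 0 = Real.exp (-p) := by simp [poi]
  have hp1 : poi p 1 = Real.exp (-p) * p := by simp [poi]
  rw [hb0, hb1, hp0, hp1]
  rw [abs_of_nonpos (by linarith), abs_of_nonneg (by nlinarith)]
  nlinarith [Real.exp_pos (-p)]

section Measure
variable {Ω : Type*} [MeasurableSpace Ω] (P : Measure Ω) [IsProbabilityMeasure P]

lemma pmf_tsum_ennreal {T : Ω → ℕ} (hT : Measurable T) :
    ∑' k, P {ω | T ω = k} = 1 := by
  have : ⋃ k : ℕ, T ⁻¹' {k} = Set.univ := by
    ext ω; simp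
  rw [show (fun k => P {ω | T ω = k}) = fun k => P (T ⁻¹' {k}) from rfl,
    ← measure_iUnion ?_ (fun k => hT (measurableSet_singleton k)), this, measure_univ]
  intro i j hij
  simp only [Set.disjoint_left]
  intro ω hi hj
  exact hij (by simp only [Set.mem_preimage, Set.mem_singleton_iff] at hi hj; rw [← hi, ← hj])

lemma pmf_summable {T : Ω → ℕ} (hT : Measurable T) :
    Summable fun k => (P {ω | T ω = k}).toReal := by
  apply ENNReal.summable_toReal
  rw [pmf_tsum_ennreal P hT]
  exact ENNReal.one_ne_top

lemma pmf_tsum {T : Ω → ℕ} (hT : Measurable T) :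
    ∑' k, (P {ω | T ω = k}).toReal = 1 := by
  rw [← ENNReal.tsum_toReal_eq (fun k => measure_ne_top P _), pmf_tsum_ennreal P hT]
  simp

lemma pmf_set {T : Ω → ℕ} (hT : Measurable T) (A : Set ℕ) :
    (P {ω | T ω ∈ A}).toReal = ∑' k : A, (P {ω | T ω = (k : ℕ)}).toReal := by
  rw [← ENNReal.tsum_toReal_eq (fun k => measure_ne_top P _)]
  congr 1
  have hs : {ω | T ω ∈ A} = ⋃ k : A, T ⁻¹' {(k : ℕ)} := by
    ext ω; simp
  have hd : Pairwise (Function.onFun Disjoint fun k : A => T ⁻¹' {(k : ℕ)}) := by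
    intro i j hij
    simp only [Function.onFun, Set.disjoint_left]
    intro ω hi hj
    apply hij
    simp only [Set.mem_preimage, Set.mem_singleton_iff] at hi hj
    exact Subtype.ext (by rw [← hi, ← hj])
  rw [hs, measure_iUnion hd (fun k => hT (measurableSet_singleton _))]
  rfl

lemma pmf_add {Y T : Ω → ℕ} (hY : Measurable Y) (hT : Measurable T)
    (hind : IndepFun Y T P) (k : ℕ) :
    (P {ω | Y ω + T ω = k}).toReal =
      cv (fun j => (P {ω | Y ω = j}).toReal) (fun j => (P {ω | T ω = j}).toReal) k := by
  have hset : {ω | Y ω + T ω = k} =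
      ⋃ j ∈ Finset.range (k+1), (Y ⁻¹' {j} ∩ T ⁻¹' {k - j}) := by
    ext ω
    simp only [Set.mem_setOf_eq, Set.mem_iUnion, Finset.mem_range, Set.mem_inter_iff,
      Set.mem_preimage, Set.mem_singleton_iff]
    constructor
    · intro h
      exact ⟨Y ω, by omega, rfl, by omega⟩
    · rintro ⟨j, hj, h1, h2⟩
      omega
  rw [hset, measure_biUnion_finset ?_ ?_]
  · rw [ENNReal.toReal_sum (fun j _ => measure_ne_top P _)]
    apply Finset.sum_congr rfl
    intro j _
    rw [hind.measure_inter_preimage_eq_mul _ _ (measurableSet_singleton j)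
      (measurableSet_singleton (k - j)), ENNReal.toReal_mul]
    rfl
  · intro i hi j hj hij
    simp only [Set.disjoint_left]
    rintro ω ⟨h1, h2⟩ ⟨h3, h4⟩
    simp only [Set.mem_preimage, Set.mem_singleton_iff] at h1 h3
    exact hij (by rw [← h1, ← h3])
  · exact fun j _ => (hY (measurableSet_singleton j)).inter (hT (measurableSet_singleton _))

lemma pmf_ber {Y : Ω → ℕ} (hY : Measurable Y) {q : ℝ} (hq0 : 0 ≤ q) (hq1 : q ≤ 1)
    (hb : ∀ ω, Y ω ≤ 1) (hl : P {ω | Y ω = 1} = ENNReal.ofReal q) (j : ℕ) :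
    (P {ω | Y ω = j}).toReal = ber q j := by
  match j with
  | 0 =>
    have : {ω | Y ω = 0} = {ω | Y ω = 1}ᶜ := by
      ext ω; have := hb ω; simp only [Set.mem_setOf_eq, Set.mem_compl_iff]; omega
    rw [this, measure_compl ?_ (measure_ne_top P _), measure_univ, hl]
    · rw [ENNReal.toReal_sub_of_le (by simpa using hq1) ENNReal.one_ne_top]
      simp [ber, ENNReal.toReal_ofReal hq0]
    · have : {ω | Y ω = 1} = Y ⁻¹' {1} := rfl
      rw [this]; exact hY (measurableSet_singleton 1)
  | 1 => rw [hl, ENNReal.toReal_ofReal hq0]; simp [ber]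
  | (m+2) =>
    have : {ω | Y ω = m + 2} = ∅ := by
      apply Set.eq_empty_iff_forall_notMem.mpr
      intro ω h
      simp only [Set.mem_setOf_eq] at h
      have := hb ω; omega
    rw [this]
    simp [ber]

end Measure
end LeCamAux

namespace LeCamAux

lemma key {Ω : Type*} [MeasurableSpace Ω] (P : Measure Ω) [IsProbabilityMeasure P]
    {n : ℕ} (X : Fin n → Ω → ℕ) (hmeas : ∀ i, Measurable (X i))
    (hindep : iIndepFun X P)
    (p : Fin n → ℝ) (hp : ∀ i, 0 ≤ p i) (hp1 : ∀ i, p i ≤ 1)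
    (hBer : ∀ i ω, X i ω ≤ 1)
    (hlaw : ∀ i, P {ω | X i ω = 1} = ENNReal.ofReal (p i)) (s : Finset (Fin n)) :
    ∑' k, |(P {ω | (∑ i ∈ s, X i ω) = k}).toReal - poi (∑ i ∈ s, p i) k|
      ≤ ∑ i ∈ s, 2 * p i ^ 2 := by
  induction s using Finset.cons_induction with
  | empty =>
    have h0 : ∀ k : ℕ, |(P {ω | (∑ i ∈ (∅ : Finset (Fin n)), X i ω) = k}).toReal
        - poi (∑ i ∈ (∅ : Finset (Fin n)), p i) k| = 0 := by
      intro k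
      simp only [Finset.sum_empty, abs_eq_zero, sub_eq_zero]
      match k with
      | 0 =>
        have : {ω : Ω | (0:ℕ) = 0} = Set.univ := by ext; simp
        rw [this]
        simp [poi]
      | (m+1) =>
        have : {ω : Ω | (0:ℕ) = m+1} = ∅ := by ext; simp
        rw [this]
        simp [poi]
    rw [tsum_congr h0]
    simp
  | cons a s ha ih =>
    have hTmeas : Measurable fun ω => ∑ i ∈ s, X i ω :=
      Finset.measurable_sum s fun i _ => hmeas i
    have hind : IndepFun (X a) (fun ω => ∑ i ∈ s, X i ω) P := by
      have h1 := hindep.indepFun_finset_sum_of_notMem hmeas ha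
      have hfe : (∑ j ∈ s, X j) = fun ω => ∑ i ∈ s, X i ω := by
        funext ω; simp [Finset.sum_apply]
      rw [hfe] at h1
      exact h1.symm
    set F : ℕ → ℝ := fun j => (P {ω | (∑ i ∈ s, X i ω) = j}).toReal with hFdef
    set G : ℕ → ℝ := poi (∑ i ∈ s, p i) with hGdef
    have hF : ∀ k, (P {ω | (∑ i ∈ Finset.cons a s ha, X i ω) = k}).toReal
        = cv (ber (p a)) F k := by
      intro k
      have hseteq : {ω | (∑ i ∈ Finset.cons a s ha, X i ω) = k}
          = {ω | X a ω + (∑ i ∈ s, X i ω) = k} := by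
        ext ω; simp only [Set.mem_setOf_eq, Finset.sum_cons]
      rw [hseteq, pmf_add P (hmeas a) hTmeas hind k]
      congr 1
      funext j
      exact pmf_ber P (hmeas a) (hp a) (hp1 a) (hBer a) (hlaw a) j
    -- summabilities
    have hFabs : Summable fun k => |F k| := (pmf_summable P hTmeas).abs
    have hFabs1 : ∑' k, |F k| = 1 := by
      have : ∀ k, |F k| = F k := fun k => abs_of_nonneg ENNReal.toReal_nonneg
      rw [tsum_congr this]
      exact pmf_tsum P hTmeas
    have hpoia : Summable fun k => |poi (p a) k| := (summable_poi _).abs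
    have hpoia1 : ∑' k, |poi (p a) k| = 1 := by
      have : ∀ k, |poi (p a) k| = poi (p a) k := fun k => abs_of_nonneg (poi_nonneg (hp a) k)
      rw [tsum_congr this]
      exact tsum_poi _
    have hbp : Summable fun k => |ber (p a) k - poi (p a) k| := summable_abs_sub_ber_poi _
    have hFG : Summable fun k => |F k - G k| :=
      ((pmf_summable P hTmeas).sub (summable_poi _)).abs
    have S1 : Summable fun k => |cv (fun j => ber (p a) j - poi (p a) j) F k| :=
      cv_abs_summable hbp hFabs
    have S2 : Summable fun k => |cv (poi (p a)) (fun j => F j - G j) k| :=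
      cv_abs_summable hpoia hFG
    -- pointwise bound
    have hpt : ∀ k, |(P {ω | (∑ i ∈ Finset.cons a s ha, X i ω) = k}).toReal
          - poi (∑ i ∈ Finset.cons a s ha, p i) k|
        ≤ |cv (fun j => ber (p a) j - poi (p a) j) F k|
          + |cv (poi (p a)) (fun j => F j - G j) k| := by
      intro k
      rw [hF k, Finset.sum_cons, ← cv_poi]
      have : cv (ber (p a)) F k - cv (poi (p a)) G k
          = cv (fun j => ber (p a) j - poi (p a) j) F k
            + cv (poi (p a)) (fun j => F j - G j) k := by
        rw [← cv_sub, ← cv_sub']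
        ring
      rw [this]
      exact abs_add_le _ _
    have hLHS : Summable fun k => |(P {ω | (∑ i ∈ Finset.cons a s ha, X i ω) = k}).toReal
        - poi (∑ i ∈ Finset.cons a s ha, p i) k| :=
      Summable.of_nonneg_of_le (fun k => abs_nonneg _) hpt (S1.add S2)
    calc ∑' k, |(P {ω | (∑ i ∈ Finset.cons a s ha, X i ω) = k}).toReal
          - poi (∑ i ∈ Finset.cons a s ha, p i) k|
        ≤ ∑' k, (|cv (fun j => ber (p a) j - poi (p a) j) F k|
            + |cv (poi (p a)) (fun j => F j - G j) k|) :=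
          Summable.tsum_le_tsum hpt hLHS (S1.add S2)
      _ = (∑' k, |cv (fun j => ber (p a) j - poi (p a) j) F k|)
            + ∑' k, |cv (poi (p a)) (fun j => F j - G j) k| := Summable.tsum_add S1 S2
      _ ≤ (∑' k, |ber (p a) k - poi (p a) k|) * (∑' k, |F k|)
            + (∑' k, |poi (p a) k|) * (∑' k, |F k - G k|) :=
          add_le_add (cv_abs_tsum_le hbp hFabs) (cv_abs_tsum_le hpoia hFG)
      _ ≤ 2 * p a ^ 2 + ∑ i ∈ s, 2 * p i ^ 2 := by
          rw [hFabs1, hpoia1, mul_one, one_mul]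
          exact add_le_add (l1_ber_poi (hp a) (hp1 a)) ih
      _ = ∑ i ∈ Finset.cons a s ha, 2 * p i ^ 2 := by rw [Finset.sum_cons]

end LeCamAux

open LeCamAux in
/-- Le Cam's theorem: For independent Bernoulli random variables `X i` with
`Pr[X i = 1] = p i`, `S = ∑ X i` and `λ = ∑ p i`, the total variation distance between the
law of `S` and the Poisson distribution with mean `λ` is at most `∑ p i ^ 2`. -/
theorem stmt4 {Ω : Type*} [MeasurableSpace Ω] (P : Measure Ω) [IsProbabilityMeasure P]
    (n : ℕ) (X : Fin n → Ω → ℕ) (hmeas : ∀ i, Measurable (X i))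
    (hindep : iIndepFun X P)
    (p : Fin n → ℝ) (hp : ∀ i, 0 ≤ p i) (hp1 : ∀ i, p i ≤ 1)
    (hBer : ∀ i ω, X i ω ≤ 1)
    (hlaw : ∀ i, P {ω | X i ω = 1} = ENNReal.ofReal (p i)) :
    ∀ A : Set ℕ,
      |(P {ω | (∑ i, X i ω) ∈ A}).toReal -
        ∑' k : A, Real.exp (-(∑ i, p i)) * (∑ i, p i) ^ (k : ℕ) / Nat.factorial (k : ℕ)| ≤
      ∑ i, p i ^ 2 := by
  intro A
  have hSmeas : Measurable fun ω => ∑ i, X i ω :=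
    Finset.measurable_sum _ fun i _ => hmeas i
  have hkey := key P X hmeas hindep p hp hp1 hBer hlaw Finset.univ
  set lam : ℝ := ∑ i, p i with hlam
  set F : ℕ → ℝ := fun k => (P {ω | (∑ i, X i ω) = k}).toReal with hFdef
  have hFsum : Summable F := pmf_summable P hSmeas
  have hGsum : Summable (poi lam) := summable_poi _
  have hFGsub : Summable fun k => F k - poi lam k := hFsum.sub hGsum
  have hFGabs : Summable fun k => |F k - poi lam k| := hFGsub.abs
  have htsum0 : ∑' k, (F k - poi lam k) = 0 := by
    rw [Summable.tsum_sub hFsum hGsum, pmf_tsum P hSmeas, tsum_poi]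
    ring
  have hPA : (P {ω | (∑ i, X i ω) ∈ A}).toReal = ∑' k : A, F (k : ℕ) :=
    pmf_set P hSmeas A
  have hGA : (∑' k : A, Real.exp (-lam) * lam ^ (k : ℕ) / Nat.factorial (k : ℕ))
      = ∑' k : A, poi lam (k : ℕ) := rfl
  rw [hPA, hGA]
  have hxy : (∑' k : A, (F (k:ℕ) - poi lam (k:ℕ)))
      + (∑' k : (Aᶜ : Set ℕ), (F (k:ℕ) - poi lam (k:ℕ))) = 0 := by
    rw [Summable.tsum_add_tsum_compl (hFGsub.subtype A) (hFGsub.subtype Aᶜ), htsum0]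
  have hx : ∑' k : A, (F (k:ℕ) - poi lam (k:ℕ))
      = (∑' k : A, F (k:ℕ)) - ∑' k : A, poi lam (k:ℕ) :=
    Summable.tsum_sub (hFsum.subtype A) (hGsum.subtype A)
  have habsx : |∑' k : A, (F (k:ℕ) - poi lam (k:ℕ))|
      ≤ ∑' k : A, |F (k:ℕ) - poi lam (k:ℕ)| := by
    simpa [Real.norm_eq_abs] using norm_tsum_le_tsum_norm (f := fun k : A => F (k:ℕ) - poi lam (k:ℕ))
      (by have h := hFGabs.subtype A; simp only [Real.norm_eq_abs]; exact h)
  have habsy : |∑' k : (Aᶜ : Set ℕ), (F (k:ℕ) - poi lam (k:ℕ))|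
      ≤ ∑' k : (Aᶜ : Set ℕ), |F (k:ℕ) - poi lam (k:ℕ)| := by
    simpa [Real.norm_eq_abs] using norm_tsum_le_tsum_norm
      (f := fun k : (Aᶜ : Set ℕ) => F (k:ℕ) - poi lam (k:ℕ))
      (by have h := hFGabs.subtype Aᶜ; simp only [Real.norm_eq_abs]; exact h)
  have hsplit : (∑' k : A, |F (k:ℕ) - poi lam (k:ℕ)|)
      + (∑' k : (Aᶜ : Set ℕ), |F (k:ℕ) - poi lam (k:ℕ)|) = ∑' k, |F k - poi lam k| :=
    Summable.tsum_add_tsum_compl (hFGabs.subtype A) (hFGabs.subtype Aᶜ)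
  have h2 : ∑ i, 2 * p i ^ 2 = 2 * ∑ i, p i ^ 2 := by
    rw [Finset.mul_sum]
  rw [← hx]
  have hynn : (0:ℝ) ≤ ∑' k : (Aᶜ : Set ℕ), |F (k:ℕ) - poi lam (k:ℕ)| :=
    tsum_nonneg fun k => abs_nonneg _
  have hxnn : (0:ℝ) ≤ ∑' k : A, |F (k:ℕ) - poi lam (k:ℕ)| :=
    tsum_nonneg fun k => abs_nonneg _
  have key2 : ∑' k, |F k - poi lam k| ≤ 2 * ∑ i, p i ^ 2 := by
    rw [← h2]; exact hkey
  have hopp : |∑' k : A, (F (k:ℕ) - poi lam (k:ℕ))|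
      = |∑' k : (Aᶜ : Set ℕ), (F (k:ℕ) - poi lam (k:ℕ))| := by
    rw [show (∑' k : A, (F (k:ℕ) - poi lam (k:ℕ)))
      = -(∑' k : (Aᶜ : Set ℕ), (F (k:ℕ) - poi lam (k:ℕ))) by linarith, abs_neg]
  linarith [habsx, habsy, hsplit, key2, hopp]
end

section
/- Let $E_1$ and $E_2$ be independent standard exponential random variables and let $F > 0$. Define $Z_1 = F \cdot E_1^{-1/p}$ and $Z_2 = F \cdot (E_1 + E_2)^{-1/p}$ for fixed $p > 0$. Then there exist constants $0 < a < b$ (depending on $p$) such that with probability at least $7/8$, simultaneously $aF \le Z_2 \le Z_1 \le bF$ and $Z_1 - Z_2 \ge aF$. -/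
open MeasureTheory Real ProbabilityTheory

set_option maxHeartbeats 1000000 in
/-- For independent standard exponentials `E₁, E₂`, `F > 0`, `p > 0`,
`Z₁ = F ⬝ E₁^{-1/p}` and `Z₂ = F ⬝ (E₁ + E₂)^{-1/p}`, there are constants `0 < a < b`
(depending only on `p`) such that with probability at least `7/8`, simultaneously
`a F ≤ Z₂ ≤ Z₁ ≤ b F` and `Z₁ - Z₂ ≥ a F`. -/
theorem stmt18 (p : ℝ) (hp : 0 < p) :
    ∃ a b : ℝ, 0 < a ∧ a < b ∧
      ∀ (Ω : Type) (_ : MeasurableSpace Ω) (P : Measure Ω), IsProbabilityMeasure P →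
      ∀ (E₁ E₂ : Ω → ℝ), Measurable E₁ → Measurable E₂ → IndepFun E₁ E₂ P →
        (∀ t : ℝ, 0 ≤ t → P {ω | t < E₁ ω} = ENNReal.ofReal (Real.exp (-t))) →
        (∀ t : ℝ, 0 ≤ t → P {ω | t < E₂ ω} = ENNReal.ofReal (Real.exp (-t))) →
        ∀ F : ℝ, 0 < F →
          (7 : ℝ) / 8 ≤
            (P {ω |
              a * F ≤ F * (E₁ ω + E₂ ω) ^ (-(1 / p)) ∧
              F * (E₁ ω + E₂ ω) ^ (-(1 / p)) ≤ F * (E₁ ω) ^ (-(1 / p)) ∧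
              F * (E₁ ω) ^ (-(1 / p)) ≤ b * F ∧
              a * F ≤ F * (E₁ ω) ^ (-(1 / p)) - F * (E₁ ω + E₂ ω) ^ (-(1 / p))}).toReal := by
  set q : ℝ := -(1/p) with hqdef
  have hqneg : q < 0 := by
    have : 0 < 1/p := by positivity
    simp [hqdef]; linarith
  have hfac : (0:ℝ) < 1 - (129/128:ℝ) ^ q := by
    have := Real.rpow_lt_one_of_one_lt_of_neg (x := (129/128:ℝ)) (z := q)
      (by norm_num) hqneg
    linarith
  refine ⟨min ((8:ℝ)^q) ((4:ℝ)^q * (1 - (129/128:ℝ)^q)), (1/32:ℝ)^q, ?_, ?_, ?_⟩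
  · exact lt_min (Real.rpow_pos_of_pos (by norm_num) q)
      (mul_pos (Real.rpow_pos_of_pos (by norm_num) q) hfac)
  · calc min ((8:ℝ)^q) ((4:ℝ)^q * (1 - (129/128:ℝ)^q)) ≤ (8:ℝ)^q := min_le_left _ _
      _ < (1/32:ℝ)^q := Real.rpow_lt_rpow_of_neg (by norm_num) (by norm_num) hqneg
  intro Ω _ P hP E₁ E₂ hE₁ hE₂ _hind htail₁ htail₂ F hF
  set a : ℝ := min ((8:ℝ)^q) ((4:ℝ)^q * (1 - (129/128:ℝ)^q)) with hadef
  set T : Set Ω := {ω |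
      a * F ≤ F * (E₁ ω + E₂ ω) ^ q ∧
      F * (E₁ ω + E₂ ω) ^ q ≤ F * (E₁ ω) ^ q ∧
      F * (E₁ ω) ^ q ≤ (1/32:ℝ)^q * F ∧
      a * F ≤ F * (E₁ ω) ^ q - F * (E₁ ω + E₂ ω) ^ q} with hTdef
  set G : Set Ω := {ω | (1/32 ≤ E₁ ω ∧ E₁ ω ≤ 4) ∧ (1/32 ≤ E₂ ω ∧ E₂ ω ≤ 4)} with hGdef
  -- pointwise inclusion
  have hsub : G ⊆ T := by
    rintro ω ⟨⟨h1, h2⟩, ⟨h3, h4⟩⟩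
    set x := E₁ ω with hx
    set y := E₂ ω with hy
    have hx0 : (0:ℝ) < x := lt_of_lt_of_le (by norm_num) h1
    have hxy0 : (0:ℝ) < x + y := by linarith
    have hub : x ^ q ≤ (1/32:ℝ)^q := Real.rpow_le_rpow_of_nonpos (by norm_num) h1 hqneg.le
    have hlb8 : (8:ℝ)^q ≤ (x + y) ^ q :=
      Real.rpow_le_rpow_of_nonpos hxy0 (by linarith) hqneg.le
    have hmono : (x + y) ^ q ≤ x ^ q :=
      Real.rpow_le_rpow_of_nonpos hx0 (by linarith) hqneg.le
    have hratio : (x + y) ^ q ≤ (x * (129/128)) ^ q := by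
      refine Real.rpow_le_rpow_of_nonpos (mul_pos hx0 (by norm_num)) (by nlinarith) hqneg.le
    have hmulr : (x * (129/128:ℝ)) ^ q = x ^ q * (129/128:ℝ) ^ q :=
      Real.mul_rpow hx0.le (by norm_num)
    have hx4 : (4:ℝ)^q ≤ x ^ q := Real.rpow_le_rpow_of_nonpos hx0 h2 hqneg.le
    have hgap : (4:ℝ)^q * (1 - (129/128:ℝ)^q) ≤ x ^ q - (x + y) ^ q := by
      have h129 : (0:ℝ) < (129/128:ℝ)^q := Real.rpow_pos_of_pos (by norm_num) q
      have : x ^ q - (x + y) ^ q ≥ x ^ q * (1 - (129/128:ℝ)^q) := by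
        rw [hmulr] at hratio; nlinarith
      nlinarith
    refine ⟨?_, ?_, ?_, ?_⟩
    · have : a ≤ (x + y) ^ q := le_trans (min_le_left _ _) hlb8
      calc a * F ≤ (x+y)^q * F := by nlinarith
        _ = F * (x+y)^q := mul_comm _ _
    · nlinarith
    · calc F * x ^ q ≤ F * (1/32:ℝ)^q := by nlinarith
        _ = (1/32:ℝ)^q * F := mul_comm _ _
    · have ha2 : a ≤ x ^ q - (x + y) ^ q := le_trans (min_le_right _ _) hgap
      have : F * x ^ q - F * (x+y)^q = F * (x ^ q - (x+y)^q) := by ring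
      rw [this]; nlinarith
  -- measurability of G
  have hGm : MeasurableSet G := by
    apply MeasurableSet.inter
    · exact (measurableSet_le measurable_const hE₁).inter (measurableSet_le hE₁ measurable_const)
    · exact (measurableSet_le measurable_const hE₂).inter (measurableSet_le hE₂ measurable_const)
  -- tail bounds
  have hlow : ∀ (E : Ω → ℝ), Measurable E →
      (∀ t : ℝ, 0 ≤ t → P {ω | t < E ω} = ENNReal.ofReal (Real.exp (-t))) →
      P {ω | E ω < 1/32} ≤ ENNReal.ofReal (1 - Real.exp (-(1/32))) := by
    intro E hE htail
    have hd : Disjoint {ω | E ω < 1/32} {ω | (1/32:ℝ) < E ω} := by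
      rw [Set.disjoint_left]; intro ω h1 h2
      simp only [Set.mem_setOf_eq] at h1 h2; linarith
    have hm2 : MeasurableSet {ω | (1/32:ℝ) < E ω} := measurableSet_lt measurable_const hE
    have hun : P {ω | E ω < 1/32} + P {ω | (1/32:ℝ) < E ω} ≤ 1 := by
      rw [← measure_union hd hm2]
      calc P _ ≤ P Set.univ := measure_mono (Set.subset_univ _)
        _ = 1 := measure_univ
    rw [htail _ (by norm_num)] at hun
    have h1 : (1:ENNReal) = ENNReal.ofReal 1 := by simp
    have hexple : Real.exp (-(1/32)) ≤ 1 := by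
      rw [Real.exp_le_one_iff]; norm_num
    have : ENNReal.ofReal (1 - Real.exp (-(1/32)))
        = 1 - ENNReal.ofReal (Real.exp (-(1/32))) := by
      rw [h1, ← ENNReal.ofReal_sub _ (Real.exp_pos _).le]
    rw [this]
    exact ENNReal.le_sub_of_add_le_right ENNReal.ofReal_ne_top hun
  have hhigh : ∀ (E : Ω → ℝ),
      (∀ t : ℝ, 0 ≤ t → P {ω | t < E ω} = ENNReal.ofReal (Real.exp (-t))) →
      P {ω | (4:ℝ) < E ω} = ENNReal.ofReal (Real.exp (-4)) := by
    intro E htail; exact htail 4 (by norm_num)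
  -- complement bound
  have hcompl : P Gᶜ ≤ ENNReal.ofReal (1/8) := by
    have hcsub : Gᶜ ⊆ {ω | E₁ ω < 1/32} ∪ {ω | (4:ℝ) < E₁ ω}
        ∪ ({ω | E₂ ω < 1/32} ∪ {ω | (4:ℝ) < E₂ ω}) := by
      intro ω hω
      simp only [hGdef, Set.mem_compl_iff, Set.mem_setOf_eq, not_and_or, not_le,
        Set.mem_union, Set.mem_setOf_eq] at hω ⊢
      rcases hω with (h | h) | (h | h) <;> tauto
    calc P Gᶜ ≤ P {ω | E₁ ω < 1/32} + P {ω | (4:ℝ) < E₁ ω}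
        + (P {ω | E₂ ω < 1/32} + P {ω | (4:ℝ) < E₂ ω}) := by
          refine le_trans (measure_mono hcsub) ?_
          refine le_trans (measure_union_le _ _) ?_
          exact add_le_add (measure_union_le _ _) (measure_union_le _ _)
      _ ≤ ENNReal.ofReal (1 - Real.exp (-(1/32))) + ENNReal.ofReal (Real.exp (-4))
        + (ENNReal.ofReal (1 - Real.exp (-(1/32))) + ENNReal.ofReal (Real.exp (-4))) := by
          gcongr
          · exact hlow E₁ hE₁ htail₁
          · exact (hhigh E₁ htail₁).le
          · exact hlow E₂ hE₂ htail₂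
          · exact (hhigh E₂ htail₂).le
      _ ≤ ENNReal.ofReal (1/32) + ENNReal.ofReal (1/32)
        + (ENNReal.ofReal (1/32) + ENNReal.ofReal (1/32)) := by
          have he1 : (1:ℝ) - 1/32 ≤ Real.exp (-(1/32)) := by
            have := Real.add_one_le_exp (-(1/32:ℝ)); linarith
          have he2 : Real.exp (-4:ℝ) ≤ 1/32 := by
            have h4 : Real.exp (4:ℝ) = Real.exp 1 ^ (4:ℕ) := by
              rw [← Real.exp_nat_mul]; norm_num
            have hd9 := Real.exp_one_gt_d9
            have h25 : (5/2:ℝ) ≤ Real.exp 1 := by norm_num at hd9; linarith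
            have hpow := pow_le_pow_left₀ (by norm_num : (0:ℝ) ≤ 5/2) h25 4
            have h32 : (32:ℝ) ≤ Real.exp 4 := by
              rw [h4]; norm_num at hpow ⊢; linarith
            rw [Real.exp_neg, inv_le_comm₀ (Real.exp_pos _) (by norm_num)]
            norm_num; linarith
          gcongr <;> linarith
      _ ≤ ENNReal.ofReal (1/8) := by
          have h1 : ENNReal.ofReal ((1:ℝ)/32) + ENNReal.ofReal ((1:ℝ)/32)
              = ENNReal.ofReal ((1:ℝ)/16) := by
            rw [← ENNReal.ofReal_add (by norm_num) (by norm_num)]; norm_num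
          rw [h1, ← ENNReal.ofReal_add (by norm_num) (by norm_num)]
          exact ENNReal.ofReal_le_ofReal (by norm_num)
  -- probability of G
  have hG : ENNReal.ofReal (7/8) ≤ P G := by
    have huniv : (1:ENNReal) ≤ P G + P Gᶜ := by
      rw [← measure_univ (μ := P)]
      calc P Set.univ = P (G ∪ Gᶜ) := by rw [Set.union_compl_self]
        _ ≤ P G + P Gᶜ := measure_union_le _ _
    have h78 : ENNReal.ofReal (7/8) + ENNReal.ofReal (1/8) = 1 := by
      rw [← ENNReal.ofReal_add (by norm_num) (by norm_num)]; norm_num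
    have : ENNReal.ofReal (7/8) + ENNReal.ofReal (1/8) ≤ P G + ENNReal.ofReal (1/8) := by
      rw [h78]
      exact le_trans huniv (add_le_add le_rfl hcompl)
    exact (ENNReal.add_le_add_iff_right ENNReal.ofReal_ne_top).mp this
  -- conclude
  have hTfin : P T ≠ ⊤ := measure_ne_top P T
  have hle : ENNReal.ofReal (7/8) ≤ P T := le_trans hG (measure_mono hsub)
  have := (ENNReal.ofReal_le_iff_le_toReal hTfin).mp hle
  calc (7:ℝ)/8 ≤ (P T).toReal := this
    _ = _ := rfl
end
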